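/- For a ≥ (n−1)/(k−1) with 2 ≤ k ≤ n, the quadratic form p_n^a = (x₁ + ... + xₙ)² + (a−1)(x₁² + ... + xₙ²) is a sum of squares of k-nomials; equivalently, the n×n matrix with diagonal entries a and off-diagonal entries 1 has factor width at most k. -/

import Mathlib

open Matrix

/-- `A` has factor width at most `k`: `A = V * Vᵀ` where every column of `V`
has at most `k` nonzero entries. -/
def HasFactorWidthLE {ι : Type*} [Fintype ι] (A : Matrix ι ι ℝ) (k : ℕ) : Prop :=
  ∃ (m : ℕ) (V : Matrix ι (Fin m) ℝ),
    A = V * Vᵀ ∧ ∀ j, {i | V i j ≠ 0}.ncard ≤ k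

/-- The cone `FW^n_k` of psd `n × n` matrices of factor width at most `k`. -/
def FW (n k : ℕ) : Set (Matrix (Fin n) (Fin n) ℝ) :=
  {A | A.PosSemidef ∧ HasFactorWidthLE A k}

/-- The principal submatrix of `A` indexed by the finite set `K`. -/
def principalSub {ι : Type*} (A : Matrix ι ι ℝ) (K : Finset ι) :
    Matrix K K ℝ :=
  A.submatrix (fun i => (i : ι)) (fun j => (j : ι))

/-- The cone `(FW^n_k)^*`: symmetric matrices all of whose `k × k` principal
submatrices are psd. -/
def FWdual (n k : ℕ) : Set (Matrix (Fin n) (Fin n) ℝ) :=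
  {A | A.IsSymm ∧ ∀ K : Finset (Fin n), K.card = k → (principalSub A K).PosSemidef}

/-- The dual cone (within symmetric matrices) with respect to the trace inner
product `⟨Y, X⟩ = trace (Y * Xᵀ)`. -/
def dualSet {n : ℕ} (C : Set (Matrix (Fin n) (Fin n) ℝ)) :
    Set (Matrix (Fin n) (Fin n) ℝ) :=
  {Y | Y.IsSymm ∧ ∀ X ∈ C, 0 ≤ (Y * Xᵀ).trace}

/-- `A` spans an extreme ray of the cone `C`. -/
def SpansExtremeRay {E : Type*} [AddCommMonoid E] [Module ℝ E]
    (C : Set E) (A : E) : Prop :=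
  A ∈ C ∧ A ≠ 0 ∧ ∀ X Y, X ∈ C → Y ∈ C → A = X + Y →
    ∃ a b : ℝ, 0 ≤ a ∧ 0 ≤ b ∧ X = a • A ∧ Y = b • A

/-- `p` is a sum of squares of `k`-nomials (polynomials with at most `k` monomials). -/
def IsSOkS {n : ℕ} (k : ℕ) (p : MvPolynomial (Fin n) ℝ) : Prop :=
  ∃ (m : ℕ) (q : Fin m → MvPolynomial (Fin n) ℝ),
    (∀ i, (q i).support.card ≤ k) ∧ p = ∑ i, (q i) ^ 2


open Finset

lemma count_lemma (n k : ℕ) (t : Finset (Fin n)) (htk : t.card ≤ k) :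
    ((Finset.univ : Finset (Finset (Fin n))).filter (fun K => K.card = k ∧ t ⊆ K)).card
      = Nat.choose (n - t.card) (k - t.card) := by
  have h1 : (tᶜ : Finset (Fin n)).card = n - t.card := by
    rw [Finset.card_compl, Fintype.card_fin]
  rw [← h1, ← Finset.card_powersetCard (k - t.card) tᶜ]
  apply Finset.card_nbij' (fun K => K \ t) (fun L => L ∪ t)
  · intro K hK
    simp only [Finset.mem_coe, mem_filter, mem_univ, true_and] at hK
    rw [Finset.mem_coe, Finset.mem_powersetCard]
    constructor
    · intro x hx
      simp only [Finset.mem_sdiff] at hx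
      simp [hx.2]
    · rw [Finset.card_sdiff_of_subset hK.2, hK.1]
  · intro L hL
    rw [Finset.mem_coe, Finset.mem_powersetCard] at hL
    have hdisj : Disjoint L t := by
      intro u huL hut x hx
      have := hL.1 (huL hx)
      simp only [Finset.mem_compl] at this
      exact absurd (hut hx) this
    simp only [Finset.mem_coe, mem_filter, mem_univ, true_and]
    refine ⟨?_, Finset.subset_union_right⟩
    rw [Finset.card_union_of_disjoint hdisj, hL.2]
    omega
  · intro K hK
    simp only [Finset.mem_coe, mem_filter, mem_univ, true_and] at hK
    exact Finset.sdiff_union_of_subset hK.2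
  · intro L hL
    rw [Finset.mem_coe, Finset.mem_powersetCard] at hL
    have hdisj : Disjoint L t := by
      intro u huL hut x hx
      have := hL.1 (huL hx)
      simp only [Finset.mem_compl] at this
      exact absurd (hut hx) this
    beta_reduce
    rw [Finset.union_sdiff_distrib, Finset.sdiff_self, Finset.union_empty,
      Finset.sdiff_eq_self_iff_disjoint.2 hdisj]

section Aux
variable (n k : ℕ) (a : ℝ)

noncomputable def Wmat (n k : ℕ) (a : ℝ) : Fin n → (Finset (Fin n) ⊕ Fin n) → ℝ :=
  fun i => Sum.elim
    (fun K => if K.card = k ∧ i ∈ K then Real.sqrt (1 / (Nat.choose (n-2) (k-2) : ℝ)) else 0)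
    (fun l => if i = l then Real.sqrt (a - ((n : ℝ) - 1) / ((k : ℝ) - 1)) else 0)

lemma key (hk : 2 ≤ k) (hkn : k ≤ n) (ha : ((n : ℝ) - 1) / ((k : ℝ) - 1) ≤ a) (i j : Fin n) :
    (∑ col : Finset (Fin n) ⊕ Fin n, Wmat n k a i col * Wmat n k a j col)
      = if i = j then a else 1 := by
  have hn2 : 2 ≤ n := hk.trans hkn
  set c : ℝ := (Nat.choose (n-2) (k-2) : ℝ) with hcdef
  have hcpos : 0 < c := by
    have h := Nat.choose_pos (show k - 2 ≤ n - 2 by omega)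
    rw [hcdef]
    exact_mod_cast h
  have hr : Real.sqrt (1 / c) * Real.sqrt (1 / c) = 1 / c :=
    Real.mul_self_sqrt (by positivity)
  have hs : Real.sqrt (a - ((n : ℝ) - 1) / ((k : ℝ) - 1)) *
      Real.sqrt (a - ((n : ℝ) - 1) / ((k : ℝ) - 1)) = a - ((n : ℝ) - 1) / ((k : ℝ) - 1) :=
    Real.mul_self_sqrt (by linarith)
  rw [Fintype.sum_sum_type]
  have h2 : (∑ l : Fin n, Wmat n k a i (Sum.inr l) * Wmat n k a j (Sum.inr l))
      = if i = j then a - ((n : ℝ) - 1) / ((k : ℝ) - 1) else 0 := by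
    simp only [Wmat, Sum.elim_inr]
    rw [Finset.sum_congr rfl (fun l _ => show
        (if i = l then _ else 0) * (if j = l then _ else 0)
          = if l = i then (if i = j then a - ((n : ℝ) - 1) / ((k : ℝ) - 1) else 0) else 0 by
      by_cases h1 : i = l
      · subst h1
        rw [if_pos rfl, if_pos rfl]
        by_cases h2 : j = i
        · rw [if_pos h2, if_pos h2.symm]; exact hs
        · rw [if_neg h2, if_neg (fun h => h2 h.symm), mul_zero]
      · rw [if_neg h1, zero_mul, if_neg (fun h => h1 h.symm)])]
    simp [Finset.sum_ite_eq']
  have h1 : (∑ K : Finset (Fin n), Wmat n k a i (Sum.inl K) * Wmat n k a j (Sum.inl K))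
      = ((Finset.univ.filter (fun K : Finset (Fin n) => K.card = k ∧ i ∈ K ∧ j ∈ K)).card : ℝ)
        * (1 / c) := by
    simp only [Wmat, Sum.elim_inl]
    rw [Finset.sum_congr rfl (fun K _ => show
        (if K.card = k ∧ i ∈ K then _ else 0) * (if K.card = k ∧ j ∈ K then _ else 0)
          = if K.card = k ∧ i ∈ K ∧ j ∈ K then (1 : ℝ) / c else 0 by
      split_ifs with p q r <;> first | (exact hr) | (simp_all) | tauto)]
    rw [← Finset.sum_filter, Finset.sum_const, nsmul_eq_mul]
  rw [h1, h2]
  by_cases hij : i = j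
  · subst hij
    have hcount : (Finset.univ.filter (fun K : Finset (Fin n) => K.card = k ∧ i ∈ K ∧ i ∈ K)).card
        = Nat.choose (n - 1) (k - 1) := by
      have := count_lemma n k {i} (by rw [Finset.card_singleton]; omega)
      simp only [Finset.card_singleton, Finset.singleton_subset_iff] at this
      rw [← this]
      congr 1
      apply Finset.filter_congr
      intro K _; tauto
    rw [hcount, if_pos rfl, if_pos rfl]
    have hnat : (n - 1) * Nat.choose (n-2) (k-2) = Nat.choose (n-1) (k-1) * (k - 1) := by
      have : (n - 2).succ * (n - 2).choose (k - 2) = (n - 2).succ.choose (k - 2).succ * (k - 2).succ :=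
        Nat.add_one_mul_choose_eq (n - 2) (k - 2)
      have e1 : Nat.succ (n - 2) = n - 1 := by omega
      have e2 : Nat.succ (k - 2) = k - 1 := by omega
      rw [e1, e2] at this
      convert this using 2 <;> omega
    have hreal : (Nat.choose (n-1) (k-1) : ℝ) * (1 / c) = ((n : ℝ) - 1) / ((k : ℝ) - 1) := by
      have hk1 : ((k : ℝ) - 1) ≠ 0 := by
        have : (2 : ℝ) ≤ (k : ℝ) := by exact_mod_cast hk
        linarith
      have hcast : ((n : ℝ) - 1) * c = (Nat.choose (n-1) (k-1) : ℝ) * ((k : ℝ) - 1) := by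
        have := congrArg (fun x : ℕ => (x : ℝ)) hnat
        push_cast at this
        have en : ((n - 1 : ℕ) : ℝ) = (n : ℝ) - 1 := by
          rw [Nat.cast_sub (by omega)]; norm_num
        have ek : ((k - 1 : ℕ) : ℝ) = (k : ℝ) - 1 := by
          rw [Nat.cast_sub (by omega)]; norm_num
        rw [en, ek] at this
        linarith [this]
      field_simp
      linarith [hcast]
    rw [hreal]; ring
  · have hcount : (Finset.univ.filter (fun K : Finset (Fin n) => K.card = k ∧ i ∈ K ∧ j ∈ K)).card
        = Nat.choose (n - 2) (k - 2) := by
      have := count_lemma n k {i, j} (by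
        rw [Finset.card_insert_of_notMem (by simpa using hij), Finset.card_singleton]; omega)
      rw [Finset.card_insert_of_notMem (by simpa using hij), Finset.card_singleton] at this
      rw [← this]
      congr 1
      apply Finset.filter_congr
      intro K _
      simp [Finset.insert_subset_iff]
    rw [hcount, if_neg hij, if_neg hij]
    rw [← hcdef]
    field_simp
    norm_num

end Aux

open MvPolynomial Finset in
theorem stmt12 (n k : ℕ) (hk : 2 ≤ k) (hkn : k ≤ n) (a : ℝ)
    (ha : ((n : ℝ) - 1) / ((k : ℝ) - 1) ≤ a) :
    IsSOkS k ((∑ i, (X i : MvPolynomial (Fin n) ℝ)) ^ 2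
        + C (a - 1) * ∑ i, (X i) ^ 2) ∧
    HasFactorWidthLE (Matrix.of fun i j : Fin n => if i = j then a else 1) k := by
  classical
  have hn2 : 2 ≤ n := hk.trans hkn
  set W := Wmat n k a with hW
  have hkey := key n k a hk hkn ha
  have hsupp : ∀ col, {i : Fin n | W i col ≠ 0}.ncard ≤ k := by
    intro col
    rcases col with K | l
    · by_cases hK : K.card = k
      · have hsub : {i : Fin n | W i (Sum.inl K) ≠ 0} ⊆ ↑K := by
          intro i hi
          simp only [hW, Wmat, Sum.elim_inl, ne_eq, Set.mem_setOf_eq] at hi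
          by_contra hx
          exact hi (if_neg (fun h => hx h.2))
        calc {i : Fin n | W i (Sum.inl K) ≠ 0}.ncard
            ≤ (↑K : Set (Fin n)).ncard := Set.ncard_le_ncard hsub K.finite_toSet
          _ = K.card := Set.ncard_coe_finset K
          _ ≤ k := hK.le
      · have hempty : {i : Fin n | W i (Sum.inl K) ≠ 0} = ∅ := by
          ext i
          simp only [hW, Wmat, Sum.elim_inl, ne_eq, Set.mem_setOf_eq, Set.mem_empty_iff_false,
            iff_false, not_not]
          exact if_neg (fun h => hK h.1)
        rw [hempty, Set.ncard_empty]; omega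
    · have hsub : {i : Fin n | W i (Sum.inr l) ≠ 0} ⊆ {l} := by
        intro i hi
        simp only [hW, Wmat, Sum.elim_inr, ne_eq, Set.mem_setOf_eq] at hi
        by_contra hx
        exact hi (if_neg (by simpa using hx))
      calc {i : Fin n | W i (Sum.inr l) ≠ 0}.ncard
          ≤ ({l} : Set (Fin n)).ncard := Set.ncard_le_ncard hsub (Set.finite_singleton l)
        _ = 1 := Set.ncard_singleton l
        _ ≤ k := by omega
  set m := Fintype.card (Finset (Fin n) ⊕ Fin n) with hm
  obtain ⟨e⟩ : Nonempty ((Finset (Fin n) ⊕ Fin n) ≃ Fin m) := ⟨Fintype.equivFin _⟩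
  have colcard : ∀ col : Finset (Fin n) ⊕ Fin n,
      (Finset.univ.filter (fun i : Fin n => W i col ≠ 0)).card ≤ k := by
    intro col
    have : ((Finset.univ.filter (fun i : Fin n => W i col ≠ 0)) : Set (Fin n))
        = {i : Fin n | W i col ≠ 0} := by
      ext i; simp
    have h2 := hsupp col
    rw [← this, Set.ncard_coe_finset] at h2
    exact h2
  constructor
  · -- SOS part
    refine ⟨m, fun jj => ∑ i, C (W i (e.symm jj)) * X i, ?_, ?_⟩
    · intro jj
      set col := e.symm jj with hcol
      set T : Finset (Fin n) := Finset.univ.filter (fun i => W i col ≠ 0) with hT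
      have hq : (∑ i, C (W i col) * X i) = ∑ i ∈ T, C (W i col) * X i := by
        refine (Finset.sum_subset (Finset.subset_univ T) ?_).symm
        intro i _ hiT
        have : W i col = 0 := by
          by_contra h
          exact hiT (Finset.mem_filter.2 ⟨Finset.mem_univ i, h⟩)
        rw [this, MvPolynomial.C_0, zero_mul]
      show (∑ i : Fin n, C (W i col) * X i).support.card ≤ k
      rw [hq]
      calc (∑ i ∈ T, C (W i col) * X i).support.card
          ≤ (T.biUnion fun i => (C (W i col) * X i).support).card :=
            Finset.card_le_card MvPolynomial.support_sum
        _ ≤ ∑ i ∈ T, (C (W i col) * X i).support.card := Finset.card_biUnion_le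
        _ ≤ ∑ _i ∈ T, 1 := by
            refine Finset.sum_le_sum fun i _ => ?_
            rw [C_mul_X_eq_monomial, support_monomial]
            split_ifs <;> simp
        _ = T.card := by simp
        _ ≤ k := colcard col
    · -- polynomial identity
      have stepA : (∑ jj : Fin m, (∑ i, C (W i (e.symm jj)) * X i) ^ 2)
          = ∑ col : Finset (Fin n) ⊕ Fin n, (∑ i, C (W i col) * X i) ^ 2 :=
        Equiv.sum_comp e.symm (fun col => (∑ i, C (W i col) * X i) ^ 2)
      have stepB : (∑ col : Finset (Fin n) ⊕ Fin n, (∑ i, C (W i col) * X i) ^ 2)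
          = ∑ i, ∑ j, C (if i = j then a else 1) * (X i * X j) := by
        have expand : ∀ col : Finset (Fin n) ⊕ Fin n,
            (∑ i, C (W i col) * X i) ^ 2
              = ∑ i, ∑ j, C (W i col * W j col) * (X i * X j) := by
          intro col
          rw [sq, Finset.sum_mul_sum]
          refine Finset.sum_congr rfl fun i _ => Finset.sum_congr rfl fun j _ => ?_
          rw [MvPolynomial.C_mul]; ring
        rw [Finset.sum_congr rfl fun col _ => expand col]
        rw [Finset.sum_comm]
        refine Finset.sum_congr rfl fun i _ => ?_
        rw [Finset.sum_comm]
        refine Finset.sum_congr rfl fun j _ => ?_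
        rw [← Finset.sum_mul, ← _root_.map_sum, hkey i j]
      have stepC : (∑ i, ∑ j, C (if i = j then a else 1) * ((X i : MvPolynomial (Fin n) ℝ) * X j))
          = (∑ i, (X i : MvPolynomial (Fin n) ℝ)) ^ 2 + C (a - 1) * ∑ i, (X i) ^ 2 := by
        have point : ∀ i j : Fin n, C (if i = j then a else 1) * ((X i : MvPolynomial (Fin n) ℝ) * X j)
            = X i * X j + (if i = j then C (a - 1) * (X i * X j) else 0) := by
          intro i j
          split_ifs with h
          · rw [show (a : ℝ) = (a - 1) + 1 by ring, MvPolynomial.C_add, MvPolynomial.C_1]; ring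
          · rw [MvPolynomial.C_1]; ring
        rw [Finset.sum_congr rfl fun i _ => Finset.sum_congr rfl fun j _ => point i j]
        rw [Finset.sum_congr rfl fun i (_ : i ∈ Finset.univ) => Finset.sum_add_distrib]
        rw [Finset.sum_add_distrib]
        congr 1
        · rw [sq, Finset.sum_mul_sum]
        · rw [Finset.sum_congr rfl fun i (_ : i ∈ Finset.univ) =>
            Finset.sum_ite_eq Finset.univ i (fun j => C (a-1) * ((X i : MvPolynomial (Fin n) ℝ) * X j))]
          simp only [Finset.mem_univ, if_pos]
          rw [← Finset.mul_sum]
          congr 1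
          exact Finset.sum_congr rfl fun i _ => by rw [sq]
      rw [stepA, stepB, stepC]
  · -- factor width part
    refine ⟨m, Matrix.of (fun i jj => W i (e.symm jj)), ?_, ?_⟩
    · ext i j
      rw [Matrix.mul_apply]
      simp only [Matrix.of_apply, Matrix.transpose_apply]
      rw [Equiv.sum_comp e.symm (fun col => W i col * W j col), hkey i j]
    · intro jj
      exact hsupp (e.symm jj)
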